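/- Let A ∈ ℝ^{m×n} be a nonzero matrix with singular value decomposition A = U Σ Vᵀ, where the singular values σ₁ ≥ σ₂ ≥ ... ≥ σ_p ≥ 0 (p = min{m,n}) are ordered nonincreasingly, U = [u₁,...,u_m] and V = [v₁,...,v_n] orthogonal. Then B = σ₁ u₁ v₁ᵀ minimizes ‖A − B‖² over all rank-one matrices B ∈ ℝ^{m×n}, and the minimum value equals ∑_{i=2}^p σᵢ². -/
import Mathlib

open Matrix BigOperators

noncomputable section

/-- Squared Frobenius norm of a real matrix. -/
def frobSq {m n : Type*} [Fintype m] [Fintype n] (A : Matrix m n ℝ) : ℝ :=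
  ∑ i, ∑ j, (A i j) ^ 2

/-- A rank-one matrix: a nonzero outer product `c dᵀ`. -/
def rankOne {m n : Type*} [Fintype m] [Fintype n] (B : Matrix m n ℝ) : Prop :=
  B ≠ 0 ∧ ∃ (c : m → ℝ) (d : n → ℝ), B = Matrix.of fun i j => c i * d j

lemma frobSq_eq_trace {m n : Type*} [Fintype m] [Fintype n] (A : Matrix m n ℝ) :
    frobSq A = Matrix.trace (Aᵀ * A) := by
  simp only [frobSq, Matrix.trace, Matrix.diag, Matrix.mul_apply, Matrix.transpose_apply, sq]
  exact Finset.sum_comm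

lemma frobSq_conj {k l : Type*} [Fintype k] [Fintype l] [DecidableEq k] [DecidableEq l]
    (U : Matrix k k ℝ) (V : Matrix l l ℝ) (hU : Uᵀ * U = 1) (hV : Vᵀ * V = 1)
    (N : Matrix k l ℝ) : frobSq (U * N * Vᵀ) = frobSq N := by
  rw [frobSq_eq_trace, frobSq_eq_trace]
  have h1 : (U * N * Vᵀ)ᵀ * (U * N * Vᵀ) = V * (Nᵀ * N) * Vᵀ := by
    calc (U * N * Vᵀ)ᵀ * (U * N * Vᵀ) = V * (Nᵀ * ((Uᵀ * U) * (N * Vᵀ))) := by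
          simp [Matrix.transpose_mul, Matrix.mul_assoc]
      _ = V * (Nᵀ * N) * Vᵀ := by rw [hU]; simp [Matrix.mul_assoc]
  rw [h1, Matrix.trace_mul_comm, ← Matrix.mul_assoc, hV, Matrix.one_mul]

lemma mulVec_dot_self {k : Type*} [Fintype k] [DecidableEq k]
    (U : Matrix k k ℝ) (hU : Uᵀ * U = 1) (y : k → ℝ) :
    ∑ i, (U.mulVec y i) ^ 2 = ∑ i, (y i) ^ 2 := by
  have h : (U.mulVec y) ⬝ᵥ (U.mulVec y) = y ⬝ᵥ y := by
    rw [Matrix.dotProduct_mulVec, ← Matrix.vecMul_transpose, Matrix.vecMul_vecMul, hU,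
      Matrix.vecMul_one]
  simpa [dotProduct, sq] using h

lemma frobSq_diag (m n : ℕ) (τ : ℕ → ℝ) :
    (∑ i : Fin (m+1), ∑ j : Fin (n+1),
      ((if (i:ℕ) = (j:ℕ) then τ i else 0))^2) =
    ∑ i ∈ Finset.range (min (m+1) (n+1)), τ i ^ 2 := by
  have h1 : ∀ i : Fin (m+1), (∑ j : Fin (n+1), ((if (i:ℕ) = (j:ℕ) then τ i else 0))^2)
      = if (i:ℕ) ∈ Finset.range (n+1) then τ i ^ 2 else 0 := by
    intro i
    rw [Fin.sum_univ_eq_sum_range (fun j => ((if (i:ℕ) = j then τ i else 0))^2)]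
    simp [apply_ite (· ^ 2), Finset.sum_ite_eq]
  simp only [h1]
  rw [Fin.sum_univ_eq_sum_range (fun i => if i ∈ Finset.range (n+1) then τ i ^ 2 else 0)]
  rw [Finset.sum_ite_mem]
  congr 1
  ext x
  simp [Nat.lt_min]

lemma sigma_mulVec_bound (m n : ℕ) (σ : ℕ → ℝ)
    (hσnonneg : ∀ i, 0 ≤ σ i) (hσmono : ∀ i j, i ≤ j → σ j ≤ σ i)
    (w : Fin (n+1) → ℝ) :
    ∑ i : Fin (m+1), ((Matrix.of fun (i : Fin (m + 1)) (j : Fin (n + 1)) =>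
        if (i : ℕ) = (j : ℕ) then σ i else 0).mulVec w i) ^ 2
      ≤ σ 0 ^ 2 * ∑ j, (w j) ^ 2 := by
  set w' : ℕ → ℝ := fun k => if h : k < n+1 then w ⟨k, h⟩ else 0 with hw'
  have hmv : ∀ i : Fin (m+1), (Matrix.of fun (i : Fin (m + 1)) (j : Fin (n + 1)) =>
      if (i : ℕ) = (j : ℕ) then σ i else 0).mulVec w i = σ i * w' i := by
    intro i
    have : ∀ j : Fin (n+1), (if (i:ℕ) = (j:ℕ) then σ i else 0) * w j
        = (fun k : ℕ => (if (i:ℕ) = k then σ i else 0) * w' k) (j : ℕ) := by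
      intro j
      simp only [hw', dif_pos j.isLt, Fin.eta]
    simp only [Matrix.mulVec, dotProduct, Matrix.of_apply]
    rw [Finset.sum_congr rfl (fun j _ => this j),
      Fin.sum_univ_eq_sum_range (fun k => (if (i:ℕ) = k then σ i else 0) * w' k)]
    simp only [ite_mul, zero_mul, Finset.sum_ite_eq]
    by_cases h : (i:ℕ) ∈ Finset.range (n+1)
    · simp [h]
    · simp only [h, if_neg, reduceIte]
      have : w' (i:ℕ) = 0 := by
        simp only [hw']; rw [dif_neg]; simpa using h
      simp [this]
  calc ∑ i : Fin (m+1), ((Matrix.of fun (i : Fin (m + 1)) (j : Fin (n + 1)) =>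
        if (i : ℕ) = (j : ℕ) then σ i else 0).mulVec w i) ^ 2
      = ∑ i ∈ Finset.range (m+1), (σ i * w' i) ^ 2 := by
        rw [Finset.sum_congr rfl (fun i _ => by rw [hmv i]),
          Fin.sum_univ_eq_sum_range (fun i => (σ i * w' i)^2)]
    _ ≤ ∑ i ∈ Finset.range (m+1), σ 0 ^ 2 * (w' i) ^ 2 := by
        apply Finset.sum_le_sum
        intro i _
        rw [mul_pow]
        have h1 : σ i ^ 2 ≤ σ 0 ^ 2 := by
          have := hσmono 0 i (Nat.zero_le i); have := hσnonneg i; nlinarith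
        nlinarith [sq_nonneg (w' i)]
    _ ≤ σ 0 ^ 2 * ∑ j ∈ Finset.range (max (m+1) (n+1)), (w' j) ^ 2 := by
        rw [← Finset.mul_sum]
        apply mul_le_mul_of_nonneg_left _ (sq_nonneg _)
        apply Finset.sum_le_sum_of_subset_of_nonneg
        · exact Finset.range_subset_range.2 (le_max_left _ _)
        · intro i _ _; positivity
    _ = σ 0 ^ 2 * ∑ j, (w j) ^ 2 := by
        congr 1
        have hrhs : ∑ j : Fin (n+1), (w j)^2 = ∑ j ∈ Finset.range (n+1), (w' j)^2 := by
          rw [← Fin.sum_univ_eq_sum_range (fun j => (w' j)^2)]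
          apply Finset.sum_congr rfl
          intro j _
          simp only [hw', dif_pos j.isLt, Fin.eta]
        rw [hrhs]; symm
        apply Finset.sum_subset (Finset.range_subset_range.2 (le_max_right _ _))
        intro x _ hx
        simp only [Finset.mem_range] at hx
        simp only [hw']
        rw [dif_neg (by omega)]
        simp

lemma row_bound {n : ℕ} (r d : Fin (n+1) → ℝ) (t : ℝ) (hD : 0 < ∑ j, d j ^ 2) :
    (∑ j, r j ^ 2) - (∑ j, r j * d j) ^ 2 / (∑ j, d j ^ 2)
      ≤ ∑ j, (r j - t * d j) ^ 2 := by
  set D := ∑ j, d j ^ 2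
  set s := ∑ j, r j * d j with hs
  have expand : ∑ j, (r j - t * d j) ^ 2
      = (∑ j, r j ^ 2) - 2 * t * s + t ^ 2 * D := by
    have h : ∀ j : Fin (n+1), (r j - t * d j) ^ 2
        = r j ^ 2 - 2 * t * (r j * d j) + t ^ 2 * d j ^ 2 := fun j => by ring
    rw [Finset.sum_congr rfl (fun j _ => h j), Finset.sum_add_distrib,
      Finset.sum_sub_distrib, ← Finset.mul_sum, ← Finset.mul_sum]
  rw [expand]
  have key : 2 * t * s - t ^ 2 * D ≤ s ^ 2 / D := by
    rw [le_div_iff₀ hD]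
    nlinarith [sq_nonneg (s - t * D)]
  linarith

set_option maxHeartbeats 2000000 in
/-- Best rank-one approximation in Frobenius norm: `σ₁ u₁ v₁ᵀ` minimizes
`‖A − B‖²` over rank-one `B`, with minimum value `∑_{i=2}^p σᵢ²`. -/
theorem rank_one_frobenius_approx (m n : ℕ)
    (A : Matrix (Fin (m + 1)) (Fin (n + 1)) ℝ)
    (U : Matrix (Fin (m + 1)) (Fin (m + 1)) ℝ)
    (V : Matrix (Fin (n + 1)) (Fin (n + 1)) ℝ)
    (σ : ℕ → ℝ)
    (hU : Uᵀ * U = 1) (hV : Vᵀ * V = 1)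
    (hσnonneg : ∀ i, 0 ≤ σ i)
    (hσmono : ∀ i j, i ≤ j → σ j ≤ σ i)
    (hσzero : ∀ i, min (m + 1) (n + 1) ≤ i → σ i = 0)
    (hA : A = U * (Matrix.of fun (i : Fin (m + 1)) (j : Fin (n + 1)) => if (i : ℕ) = (j : ℕ) then σ i else 0) * Vᵀ)
    (hAne : A ≠ 0)
    (B₁ : Matrix (Fin (m + 1)) (Fin (n + 1)) ℝ)
    (hB₁ : B₁ = Matrix.of fun i j => σ 0 * U i 0 * V j 0) :
    rankOne B₁ ∧
    (∀ B : Matrix (Fin (m + 1)) (Fin (n + 1)) ℝ, rankOne B →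
      frobSq (A - B₁) ≤ frobSq (A - B)) ∧
    frobSq (A - B₁) = ∑ i ∈ Finset.Ico 1 (min (m + 1) (n + 1)), (σ i) ^ 2 := by
  set p := min (m + 1) (n + 1) with hp
  have hp0 : 0 < p := by omega
  have fvm : ∀ (k : Fin (m+1)), ((k:ℕ) = 0) ↔ k = 0 := fun k =>
    ⟨fun h => Fin.ext (by simp [h]), fun h => by simp [h]⟩
  have fvn : ∀ (k : Fin (n+1)), ((k:ℕ) = 0) ↔ k = 0 := fun k =>
    ⟨fun h => Fin.ext (by simp [h]), fun h => by simp [h]⟩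
  obtain ⟨Sg, hSg⟩ : ∃ S : Matrix (Fin (m + 1)) (Fin (n + 1)) ℝ,
      S = Matrix.of fun (i : Fin (m + 1)) (j : Fin (n + 1)) =>
        if (i : ℕ) = (j : ℕ) then σ i else 0 := ⟨_, rfl⟩
  rw [← hSg] at hA
  -- σ 0 > 0
  have hσ0 : 0 < σ 0 := by
    rcases lt_or_eq_of_le (hσnonneg 0) with h | h
    · exact h
    have hz : ∀ i : ℕ, σ i = 0 := fun i =>
      le_antisymm (h ▸ hσmono 0 i (Nat.zero_le i)) (hσnonneg i)
    exfalso; apply hAne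
    have hSz : Sg = 0 := by
      ext i j; simp [hSg, hz]
    rw [hA, hSz]
    simp
  -- nonzero columns
  have hu : ∃ i, U i 0 ≠ 0 := by
    by_contra h; push_neg at h
    have h00 := congrFun (congrFun hU 0) 0
    simp [Matrix.mul_apply, Matrix.one_apply, h] at h00
  have hv : ∃ j, V j 0 ≠ 0 := by
    by_contra h; push_neg at h
    have h00 := congrFun (congrFun hV 0) 0
    simp [Matrix.mul_apply, Matrix.one_apply, h] at h00
  -- rank one
  have hrank : rankOne B₁ := by
    constructor
    · obtain ⟨i, hi⟩ := hu
      obtain ⟨j, hj⟩ := hv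
      intro h
      have h2 := congrFun (congrFun h i) j
      simp only [hB₁, Matrix.of_apply, Matrix.zero_apply] at h2
      exact (mul_ne_zero (mul_ne_zero (ne_of_gt hσ0) hi) hj) h2
    · exact ⟨fun i => σ 0 * U i 0, fun j => V j 0, by ext i j; simp [hB₁, mul_assoc]⟩
  -- B₁ = U * E * Vᵀ
  obtain ⟨E, hE⟩ : ∃ S : Matrix (Fin (m + 1)) (Fin (n + 1)) ℝ,
      S = Matrix.of fun (i : Fin (m + 1)) (j : Fin (n + 1)) => if (i : ℕ) = 0 ∧ (j : ℕ) = 0 then σ 0 else 0 := ⟨_, rfl⟩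
  have hBE : B₁ = U * E * Vᵀ := by
    ext i j
    simp only [hB₁, Matrix.mul_apply, Matrix.of_apply, Matrix.transpose_apply, hE]
    have inner : ∀ x : Fin (n+1), (∑ k, U i k * if (k:ℕ) = 0 ∧ (x:ℕ) = 0 then σ 0 else 0)
        = if (x:ℕ) = 0 then U i 0 * σ 0 else 0 := by
      intro x
      by_cases hx : (x:ℕ) = 0
      · simp only [hx, and_true, if_pos]
        simp [mul_ite, fvm]
      · simp [hx]
    rw [Finset.sum_congr rfl (fun x _ => by rw [inner x])]
    simp only [ite_mul, zero_mul]
    simp only [fvn, Finset.sum_ite_eq', Finset.mem_univ, if_true]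
    ring
  -- N := Sg - E
  obtain ⟨N, hN⟩ : ∃ S : Matrix (Fin (m + 1)) (Fin (n + 1)) ℝ,
      S = Matrix.of fun (i : Fin (m + 1)) (j : Fin (n + 1)) => if (i : ℕ) = (j : ℕ) then (if (i : ℕ) = 0 then 0 else σ i) else 0
    := ⟨_, rfl⟩
  have hNE : Sg - E = N := by
    ext i j
    simp only [Matrix.sub_apply, Matrix.of_apply, hSg, hE, hN]
    by_cases h1 : (i:ℕ) = (j:ℕ)
    · by_cases h3 : (i:ℕ) = 0
      · rw [if_pos h1, if_pos h1, if_pos h3, if_pos ⟨h3, by omega⟩, h3, sub_self]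
      · rw [if_pos h1, if_pos h1, if_neg h3, if_neg (fun h => h3 h.1), sub_zero]
    · rw [if_neg h1, if_neg h1, if_neg (fun h => h1 (h.1.trans h.2.symm)), sub_zero]
  have hAB₁ : A - B₁ = U * N * Vᵀ := by
    rw [hA, hBE, ← Matrix.sub_mul, ← Matrix.mul_sub, hNE]
  -- value
  have hval : frobSq (A - B₁) = ∑ i ∈ Finset.Ico 1 p, (σ i) ^ 2 := by
    rw [hAB₁, frobSq_conj U V hU hV]
    have : frobSq N = ∑ i ∈ Finset.range p, (fun k => if k = 0 then 0 else σ k) i ^ 2 := by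
      have h0 : frobSq N = ∑ i : Fin (m+1), ∑ j : Fin (n+1),
          ((if (i:ℕ) = (j:ℕ) then (if (i:ℕ) = 0 then 0 else σ i) else 0))^2 := by
        simp only [frobSq, hN, Matrix.of_apply]
      exact h0.trans (frobSq_diag m n (fun k => if k = 0 then 0 else σ k))
    rw [this, Finset.range_eq_Ico, Finset.sum_eq_sum_Ico_succ_bot hp0]
    norm_num
    apply Finset.sum_congr rfl
    intro i hi
    simp only [Finset.mem_Ico] at hi
    rw [if_neg (by omega)]
  -- frobSq A
  have hfA : frobSq A = ∑ i ∈ Finset.range p, (σ i) ^ 2 := by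
    rw [hA, frobSq_conj U V hU hV, ← frobSq_diag m n σ]
    simp only [frobSq, hSg, Matrix.of_apply]
  have hsplit : ∑ i ∈ Finset.range p, (σ i) ^ 2
      = σ 0 ^ 2 + ∑ i ∈ Finset.Ico 1 p, (σ i) ^ 2 := by
    rw [Finset.range_eq_Ico, Finset.sum_eq_sum_Ico_succ_bot hp0]
  -- minimality
  refine ⟨hrank, ?_, hval⟩
  intro B hB
  obtain ⟨hBne, c, d, hBcd⟩ := hB
  have hd : ∃ j, d j ≠ 0 := by
    by_contra h; push_neg at h
    apply hBne; ext i j; simp [hBcd, h j]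
  set D := ∑ j, d j ^ 2 with hD
  have hDpos : 0 < D := by
    obtain ⟨j, hj⟩ := hd
    have h1 : 0 < d j ^ 2 := by positivity
    have h2 : d j ^ 2 ≤ D :=
      Finset.single_le_sum (fun i _ => sq_nonneg (d i)) (Finset.mem_univ j)
    linarith
  have step2 : frobSq A - (∑ i, ((A.mulVec d) i) ^ 2) / D ≤ frobSq (A - B) := by
    have e1 : frobSq (A - B) = ∑ i, ∑ j, (A i j - c i * d j) ^ 2 := by
      simp [frobSq, hBcd, Matrix.sub_apply]
    have e2 : frobSq A - (∑ i, ((A.mulVec d) i) ^ 2) / D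
        = ∑ i, ((∑ j, A i j ^ 2) - (∑ j, A i j * d j) ^ 2 / D) := by
      rw [Finset.sum_sub_distrib]
      congr 1
      rw [Finset.sum_div]
      apply Finset.sum_congr rfl
      intro i _
      have h2 : (A.mulVec d) i = ∑ j, A i j * d j := by
        simp [Matrix.mulVec, dotProduct]
      rw [h2]
    rw [e1, e2]
    exact Finset.sum_le_sum fun i _ => row_bound (fun j => A i j) d (c i) hDpos
  have step3 : ∑ i, ((A.mulVec d) i) ^ 2 ≤ σ 0 ^ 2 * D := by
    have hVT : (Vᵀ)ᵀ * Vᵀ = 1 := by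
      rw [Matrix.transpose_transpose]; exact mul_eq_one_comm.mp hV
    have e3 : A.mulVec d = U.mulVec (Sg.mulVec (Vᵀ.mulVec d)) := by
      rw [hA]
      simp [Matrix.mulVec_mulVec, Matrix.mul_assoc]
    rw [e3, mulVec_dot_self U hU]
    calc ∑ i, (Sg.mulVec (Vᵀ.mulVec d) i) ^ 2
        ≤ σ 0 ^ 2 * ∑ j, ((Vᵀ.mulVec d) j) ^ 2 := by
          simpa [hSg] using sigma_mulVec_bound m n σ hσnonneg hσmono (Vᵀ.mulVec d)
      _ = σ 0 ^ 2 * D := by rw [mulVec_dot_self Vᵀ hVT]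
  have step4 : (∑ i, ((A.mulVec d) i) ^ 2) / D ≤ σ 0 ^ 2 := by
    rw [div_le_iff₀ hDpos]
    exact step3
  rw [hval]
  have : frobSq A - σ 0 ^ 2 = ∑ i ∈ Finset.Ico 1 p, (σ i) ^ 2 := by
    rw [hfA, hsplit]; ring
  linarith
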